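/- For each k ≥ 1 there exist unique constants c_0, c_1, …, c_{k-1} ∈ R such that the series H^(k) := h^(k) + Σ_{l=0}^{k-1} c_l·h^(l) has vanishing coefficient of z^m for all m with 0 ≤ m ≤ k−1; for this choice H^(k) = z^k + Σ_{l ≥ 1} H^k_l z^{-l} for some H^k_l ∈ R, and moreover c_{k-1} = 0. -/

import Mathlib

/-
We model the ring `R((z⁻¹))` of formal Laurent series in `z⁻¹` over `R`
as `HahnSeries ℤ R`, with the convention that the index `n : ℤ` records the
coefficient of `z^(-n)`; thus the coefficient of `zᵐ` in `f` is `f.coeff (-m)`.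
-/

/-- The coefficientwise extension of an additive map `d : R → R` to `R((z⁻¹))`. -/
noncomputable def coeffExt {R : Type*} [CommRing R] (d : R →+ R)
    (f : HahnSeries ℤ R) : HahnSeries ℤ R where
  coeff n := d (f.coeff n)
  isPWO_support' := f.isPWO_support'.mono (fun n hn => by
    simp only [Function.mem_support] at hn ⊢
    exact fun h => hn (by rw [h, map_zero]))

/-- The Faà di Bruno iterates `h^(0) = 1`, `h^(k+1) = d(h^(k)) + h * h^(k)` in `R((z⁻¹))`. -/
noncomputable def fdb {R : Type*} [CommRing R] (d : R →+ R)
    (h : HahnSeries ℤ R) : ℕ → HahnSeries ℤ R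
  | 0 => 1
  | k + 1 => coeffExt d (fdb d h k) + h * fdb d h k

section Aux

variable {R : Type*} [CommRing R]

lemma coeffExt_coeff (d : R →+ R) (f : HahnSeries ℤ R) (n : ℤ) :
    (coeffExt d f).coeff n = d (f.coeff n) := rfl

lemma sum_coeff {ι : Type*} (s : Finset ι) (f : ι → HahnSeries ℤ R) (n : ℤ) :
    (∑ l ∈ s, f l).coeff n = ∑ l ∈ s, (f l).coeff n :=
  map_sum (HahnSeries.coeff.addMonoidHom n) f s

lemma mul_coeff_zero_of (f g : HahnSeries ℤ R) (a b n : ℤ)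
    (hf : ∀ i : ℤ, i < a → f.coeff i = 0) (hg : ∀ j : ℤ, j < b → g.coeff j = 0)
    (hn : n < a + b) : (f * g).coeff n = 0 := by
  rw [HahnSeries.coeff_mul]
  refine Finset.sum_eq_zero fun ij hij => ?_
  rw [Finset.mem_addAntidiagonal] at hij
  obtain ⟨h1, h2, h3⟩ := hij
  by_cases hia : ij.1 < a
  · rw [hf _ hia, zero_mul]
  · have : ij.2 < b := by omega
    rw [hg _ this, mul_zero]

/-- Multiplying by `h = z + (lower order)` shifts coefficients, in the range
below the "interaction" threshold. -/
lemma h_mul_coeff (h : HahnSeries ℤ R)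
    (hz : h.coeff (-1) = 1) (h0 : h.coeff 0 = 0)
    (hpos : ∀ m : ℤ, 2 ≤ m → h.coeff (-m) = 0)
    (g : HahnSeries ℤ R) (b n : ℤ)
    (hg : ∀ j : ℤ, j < b → g.coeff j = 0) (hn : n < b + 1) :
    (h * g).coeff n = g.coeff (n + 1) := by
  have hsplit : (h * g).coeff n
      = (HahnSeries.single (-1 : ℤ) (1 : R) * g).coeff n
        + ((h - HahnSeries.single (-1 : ℤ) (1 : R)) * g).coeff n := by
    rw [← HahnSeries.coeff_add, ← add_mul, add_sub_cancel]
  have h1 : (HahnSeries.single (-1 : ℤ) (1 : R) * g).coeff n = g.coeff (n + 1) := by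
    have := HahnSeries.coeff_single_mul_add (r := (1 : R)) (x := g) (a := n + 1) (b := (-1 : ℤ))
    simpa using this
  have h2 : ((h - HahnSeries.single (-1 : ℤ) (1 : R)) * g).coeff n = 0 := by
    refine mul_coeff_zero_of _ _ 1 b n (fun i hi => ?_) hg (by omega)
    rw [HahnSeries.coeff_sub, HahnSeries.coeff_single]
    rcases eq_or_ne i (-1) with rfl | hne
    · simp [hz]
    · rw [if_neg hne, sub_zero]
      rcases eq_or_ne i 0 with rfl | hne0
      · exact h0
      · have : 2 ≤ -i := by omega
        have := hpos (-i) this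
        simpa using this
  rw [hsplit, h1, h2, add_zero]

lemma deriv_one_of_hd (d : R →+ R) (hd : ∀ a b : R, d (a * b) = a * d b + d a * b) :
    d 1 = 0 := by
  have := hd 1 1
  simp only [one_mul, mul_one] at this
  exact (left_eq_add.mp this)

lemma fdb_coeff_main (d : R →+ R) (h : HahnSeries ℤ R)
    (hz : h.coeff (-1) = 1) (h0 : h.coeff 0 = 0)
    (hpos : ∀ m : ℤ, 2 ≤ m → h.coeff (-m) = 0) (k : ℕ) :
    (∀ n : ℤ, n < -(k : ℤ) → (fdb d h k).coeff n = 0) ∧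
      (fdb d h k).coeff (-(k : ℤ)) = 1 := by
  induction k with
  | zero =>
    constructor
    · intro n hn
      simp only [fdb, HahnSeries.coeff_one]
      rw [if_neg (by omega)]
    · simp [fdb, HahnSeries.coeff_one]
  | succ k ih =>
    obtain ⟨ih1, ih2⟩ := ih
    have hmul : ∀ n : ℤ, n < -(k : ℤ) + 1 →
        (h * fdb d h k).coeff n = (fdb d h k).coeff (n + 1) := fun n hn =>
      h_mul_coeff h hz h0 hpos _ (-(k : ℤ)) n ih1 hn
    constructor
    · intro n hn
      push_cast at hn
      show d ((fdb d h k).coeff n) + (h * fdb d h k).coeff n = 0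
      rw [ih1 n (by omega), map_zero, hmul n (by omega), ih1 (n + 1) (by omega), add_zero]
    · show d ((fdb d h k).coeff (-((k : ℤ) + 1))) + (h * fdb d h k).coeff (-((k : ℤ) + 1)) = 1
      rw [ih1 _ (by omega), map_zero, hmul _ (by omega), zero_add]
      have : -((k : ℤ) + 1) + 1 = -(k : ℤ) := by ring
      rw [this, ih2]

lemma fdb_coeff_lt (d : R →+ R) (h : HahnSeries ℤ R)
    (hz : h.coeff (-1) = 1) (h0 : h.coeff 0 = 0)
    (hpos : ∀ m : ℤ, 2 ≤ m → h.coeff (-m) = 0) (k : ℕ) :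
    ∀ n : ℤ, n < -(k : ℤ) → (fdb d h k).coeff n = 0 :=
  (fdb_coeff_main d h hz h0 hpos k).1

lemma fdb_coeff_lead (d : R →+ R) (h : HahnSeries ℤ R)
    (hz : h.coeff (-1) = 1) (h0 : h.coeff 0 = 0)
    (hpos : ∀ m : ℤ, 2 ≤ m → h.coeff (-m) = 0) (k : ℕ) :
    (fdb d h k).coeff (-(k : ℤ)) = 1 :=
  (fdb_coeff_main d h hz h0 hpos k).2

lemma fdb_coeff_next (d : R →+ R)
    (hd : ∀ a b : R, d (a * b) = a * d b + d a * b) (h : HahnSeries ℤ R)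
    (hz : h.coeff (-1) = 1) (h0 : h.coeff 0 = 0)
    (hpos : ∀ m : ℤ, 2 ≤ m → h.coeff (-m) = 0) (k : ℕ) :
    (fdb d h k).coeff (-(k : ℤ) + 1) = 0 := by
  induction k with
  | zero =>
    simp only [fdb, Nat.cast_zero, neg_zero, zero_add, HahnSeries.coeff_one]
    rw [if_neg (by omega)]
  | succ k ih =>
    have hlt := fdb_coeff_lt d h hz h0 hpos k
    have hlead := fdb_coeff_lead d h hz h0 hpos k
    have hmul : ∀ n : ℤ, n < -(k : ℤ) + 1 →
        (h * fdb d h k).coeff n = (fdb d h k).coeff (n + 1) := fun n hn =>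
      h_mul_coeff h hz h0 hpos _ (-(k : ℤ)) n hlt hn
    have hcast : -((k : ℕ) + 1 : ℕ) + 1 = -(k : ℤ) := by push_cast; ring
    rw [hcast]
    show d ((fdb d h k).coeff (-(k : ℤ))) + (h * fdb d h k).coeff (-(k : ℤ)) = 0
    rw [hlead, deriv_one_of_hd d hd, hmul _ (by omega), zero_add]
    have : -(k : ℤ) + 1 = -(k : ℤ) + 1 := rfl
    exact ih

end Aux

/-- Let `h = z + Σ_{l ≥ 1} h_l z^(-l)` in `R((z⁻¹))`.  For each `k ≥ 1` there
exist unique constants `c_0, …, c_(k-1) ∈ R` such that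
`H^(k) := h^(k) + Σ_{l=0}^{k-1} c_l • h^(l)` has vanishing coefficient of `z^m`
for all `0 ≤ m ≤ k-1`; for this choice `H^(k) = z^k + Σ_{l ≥ 1} H^k_l z^(-l)`
(i.e. the coefficient of `z^k` is `1` and the coefficients of `z^m` vanish
for all `m > k`), and moreover `c_(k-1) = 0`. -/
theorem faa_di_bruno_unique_constants
    {R : Type*} [CommRing R] (d : R →+ R)
    (hd : ∀ a b : R, d (a * b) = a * d b + d a * b)
    (h : HahnSeries ℤ R)
    (hz : h.coeff (-1) = 1)
    (h0 : h.coeff 0 = 0)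
    (hpos : ∀ m : ℤ, 2 ≤ m → h.coeff (-m) = 0)
    (k : ℕ) (hk : 1 ≤ k) :
    (∃! c : Fin k → R,
      ∀ m : ℕ, m < k →
        (fdb d h k + ∑ l : Fin k, c l • fdb d h l).coeff (-(m : ℤ)) = 0) ∧
    (∀ c : Fin k → R,
      (∀ m : ℕ, m < k →
        (fdb d h k + ∑ l : Fin k, c l • fdb d h l).coeff (-(m : ℤ)) = 0) →
      (fdb d h k + ∑ l : Fin k, c l • fdb d h l).coeff (-(k : ℤ)) = 1 ∧
      (∀ m : ℤ, (k : ℤ) < m →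
        (fdb d h k + ∑ l : Fin k, c l • fdb d h l).coeff (-m) = 0) ∧
      c ⟨k - 1, by omega⟩ = 0) := by
  have hlt := fdb_coeff_lt d h hz h0 hpos
  have hlead := fdb_coeff_lead d h hz h0 hpos
  have hnext := fdb_coeff_next d hd h hz h0 hpos
  -- coefficient of the combination
  have coefSum : ∀ (c : Fin k → R) (n : ℤ),
      (fdb d h k + ∑ l : Fin k, c l • fdb d h l).coeff n
        = (fdb d h k).coeff n + ∑ l : Fin k, c l * (fdb d h l).coeff n := by
    intro c n
    rw [HahnSeries.coeff_add, sum_coeff]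
    simp only [HahnSeries.coeff_smul, smul_eq_mul]
  -- existence
  have exist : ∀ j : ℕ, j ≤ k → ∃ c : Fin k → R,
      ∀ m : ℕ, k - j ≤ m → m < k →
        (fdb d h k + ∑ l : Fin k, c l • fdb d h l).coeff (-(m : ℤ)) = 0 := by
    intro j
    induction j with
    | zero => exact fun _ => ⟨0, fun m hm1 hm2 => absurd hm1 (by omega)⟩
    | succ j ihj =>
      intro hjk
      obtain ⟨c, hc⟩ := ihj (by omega)
      set m0 : ℕ := k - j - 1 with hm0
      have hm0k : m0 < k := by omega
      set i0 : Fin k := ⟨m0, hm0k⟩ with hi0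
      set r : R := (fdb d h k + ∑ l : Fin k, c l • fdb d h l).coeff (-(m0 : ℤ)) with hr
      refine ⟨fun l => c l + (if l = i0 then -r else 0), fun m hm1 hm2 => ?_⟩
      have hsum : ∀ n : ℤ,
          (fdb d h k + ∑ l : Fin k, (c l + (if l = i0 then -r else 0)) • fdb d h l).coeff n
            = (fdb d h k + ∑ l : Fin k, c l • fdb d h l).coeff n
              + (-r) * (fdb d h m0).coeff n := by
        intro n
        rw [coefSum, coefSum]
        have : ∑ l : Fin k, (c l + (if l = i0 then -r else 0)) * (fdb d h l).coeff n
            = (∑ l : Fin k, c l * (fdb d h l).coeff n)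
              + ∑ l : Fin k, (if l = i0 then -r * (fdb d h l).coeff n else 0) := by
          rw [← Finset.sum_add_distrib]
          refine Finset.sum_congr rfl fun l _ => ?_
          rcases eq_or_ne l i0 with rfl | hne
          · simp [add_mul]
          · simp [hne]
        rw [this, Finset.sum_ite_eq' Finset.univ i0
          (fun l => -r * (fdb d h l).coeff n), if_pos (Finset.mem_univ i0)]
        ring
      rw [hsum]
      rcases eq_or_lt_of_le hm1 with heq | hlt'
      · -- m = m0
        have : m = m0 := by omega
        subst this
        rw [← hr, hlead m0]
        ring
      · -- m > m0, old coefficient already vanishes and fdb m0 does not contribute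
        rw [hc m (by omega) hm2, hlt m0 (-(m : ℤ)) (by omega), mul_zero, add_zero]
  obtain ⟨c₀, hc₀⟩ := exist k le_rfl
  have hc₀' : ∀ m : ℕ, m < k →
      (fdb d h k + ∑ l : Fin k, c₀ l • fdb d h l).coeff (-(m : ℤ)) = 0 :=
    fun m hm => hc₀ m (by omega) hm
  -- uniqueness
  have uniq : ∀ c c' : Fin k → R,
      (∀ m : ℕ, m < k →
        (fdb d h k + ∑ l : Fin k, c l • fdb d h l).coeff (-(m : ℤ)) = 0) →
      (∀ m : ℕ, m < k →
        (fdb d h k + ∑ l : Fin k, c' l • fdb d h l).coeff (-(m : ℤ)) = 0) →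
      c = c' := by
    intro c c' hc hc'
    have key : ∀ i : ℕ, ∀ l : Fin k, k - 1 - (l : ℕ) ≤ i → c l = c' l := by
      intro i
      induction i using Nat.strong_induction_on with
      | _ i ih =>
        intro l hl
        have h1 := hc l l.isLt
        have h2 := hc' l l.isLt
        rw [coefSum] at h1 h2
        have hdiff : ∑ l'' : Fin k, (c l'' - c' l'') * (fdb d h l'').coeff (-((l : ℕ) : ℤ))
            = 0 := by
          have : ∑ l'' : Fin k, (c l'' - c' l'') * (fdb d h l'').coeff (-((l : ℕ) : ℤ))
              = (∑ l'' : Fin k, c l'' * (fdb d h l'').coeff (-((l : ℕ) : ℤ)))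
                - ∑ l'' : Fin k, c' l'' * (fdb d h l'').coeff (-((l : ℕ) : ℤ)) := by
            rw [← Finset.sum_sub_distrib]
            exact Finset.sum_congr rfl fun l'' _ => by ring
          rw [this]
          have e1 : ∑ l'' : Fin k, c l'' * (fdb d h l'').coeff (-((l : ℕ) : ℤ))
              = -(fdb d h k).coeff (-((l : ℕ) : ℤ)) := eq_neg_of_add_eq_zero_right h1
          have e2 : ∑ l'' : Fin k, c' l'' * (fdb d h l'').coeff (-((l : ℕ) : ℤ))
              = -(fdb d h k).coeff (-((l : ℕ) : ℤ)) := eq_neg_of_add_eq_zero_right h2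
          rw [e1, e2, sub_self]
        have hsingle : ∑ l'' : Fin k, (c l'' - c' l'') * (fdb d h l'').coeff (-((l : ℕ) : ℤ))
            = c l - c' l := by
          rw [Finset.sum_eq_single_of_mem l (Finset.mem_univ l)]
          · rw [hlead l]; ring
          · intro l'' _ hne
            rcases lt_or_gt_of_ne (fun hcontra : (l'' : ℕ) = (l : ℕ) =>
              hne (Fin.ext hcontra)) with hltl | hgtl
            · -- l'' < l : coefficient vanishes
              rw [hlt l'' (-((l : ℕ) : ℤ)) (by omega), mul_zero]
            · -- l'' > l : c l'' = c' l'' by induction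
              have : c l'' = c' l'' := by
                rcases Nat.lt_or_ge (k - 1 - (l'' : ℕ)) i with hlt2 | hge2
                · exact ih _ hlt2 l'' le_rfl
                · exfalso
                  have hl'' : (l'' : ℕ) < k := l''.isLt
                  omega
              rw [this, sub_self, zero_mul]
        have : c l - c' l = 0 := by rw [← hsingle]; exact hdiff
        exact sub_eq_zero.mp this
    funext l
    exact key (k - 1 - (l : ℕ)) l le_rfl
  refine ⟨⟨c₀, hc₀', fun c hc => uniq c c₀ hc hc₀'⟩, ?_⟩
  intro c hc
  refine ⟨?_, ?_, ?_⟩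
  · rw [coefSum, hlead k]
    have : ∑ l : Fin k, c l * (fdb d h l).coeff (-(k : ℤ)) = 0 := by
      refine Finset.sum_eq_zero fun l _ => ?_
      rw [hlt l (-(k : ℤ)) (by have := l.isLt; omega), mul_zero]
    rw [this, add_zero]
  · intro m hm
    rw [coefSum, hlt k (-m) (by omega)]
    have : ∑ l : Fin k, c l * (fdb d h l).coeff (-m) = 0 := by
      refine Finset.sum_eq_zero fun l _ => ?_
      rw [hlt l (-m) (by have := l.isLt; omega), mul_zero]
    rw [this, add_zero]
  · -- c at k-1 is zero
    have hm := hc (k - 1) (by omega)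
    rw [coefSum] at hm
    have hcast : -(((k - 1 : ℕ) : ℕ) : ℤ) = -(k : ℤ) + 1 := by
      have : ((k - 1 : ℕ) : ℤ) = (k : ℤ) - 1 := by
        have := hk; push_cast [Nat.cast_sub hk]; ring
      rw [this]; ring
    rw [hcast, hnext k] at hm
    have hsingle : ∑ l : Fin k, c l * (fdb d h l).coeff (-(k : ℤ) + 1)
        = c ⟨k - 1, by omega⟩ := by
      rw [Finset.sum_eq_single_of_mem (⟨k - 1, by omega⟩ : Fin k)
        (Finset.mem_univ _)]
      · have hco : (fdb d h (k - 1)).coeff (-(k : ℤ) + 1) = 1 := by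
          rw [← hcast]; exact hlead (k - 1)
        show c ⟨k - 1, by omega⟩ * (fdb d h (k - 1)).coeff (-(k : ℤ) + 1)
          = c ⟨k - 1, by omega⟩
        rw [hco, mul_one]
      · intro l _ hne
        have hlk : (l : ℕ) < k - 1 := by
          have := l.isLt
          have : (l : ℕ) ≠ k - 1 := fun hcontra => hne (Fin.ext (by simpa using hcontra))
          omega
        rw [hlt l (-(k : ℤ) + 1) (by omega), mul_zero]
    rw [hsingle, zero_add] at hm
    exact hm
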